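/- Let n ≥ 1 and let τ be the operator on smooth functions φ : {t>0} × ℝⁿ → ℂ given by τ(φ) = t²·φ_tt + (1−n)·t·φ_t + t²·Δ_x φ (the Laplace–Beltrami operator of ℝH^{n+1}). If H : ℝⁿ → ℂ is harmonic (Δ_x H = 0), then for every positive integer p the function φ_p(t,x) = (a + b·tⁿ)·log(t)^{p−1}·H(x) satisfies τ^p(φ_p) = 0; moreover if (a,b) ≠ (0,0) and H ≠ 0 then τ^{p−1}(φ_p) ≠ 0, so φ_p is proper p-harmonic. -/

import Mathlib

open Polynomial


open scoped Real

/-- The Euclidean Laplacian in the `x`-variables, acting coordinatewise. -/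
noncomputable def lapE (n : ℕ) (H : (Fin n → ℝ) → ℂ) : (Fin n → ℝ) → ℂ := fun x =>
  ∑ i, deriv (deriv (fun s => H (Function.update x i s))) (x i)

/-- The Laplace–Beltrami operator of `ℝH^{n+1}` in half-space coordinates:
`τ(φ) = t²·φ_tt + (1−n)·t·φ_t + t²·Δ_x φ`. -/
noncomputable def tauRHn (n : ℕ) (φ : ℝ → (Fin n → ℝ) → ℂ) : ℝ → (Fin n → ℝ) → ℂ :=
  fun t x =>
    (t : ℂ) ^ 2 * deriv (deriv (fun s => φ s x)) t
      + (1 - (n : ℂ)) * (t : ℂ) * deriv (fun s => φ s x) t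
      + (t : ℂ) ^ 2 * lapE n (φ t) x

namespace Stmt3

/-- `Lop c A = A'' + c·A'` as a linear endomorphism. -/
noncomputable def Lop (c : ℂ) : Module.End ℂ (Polynomial ℂ) :=
  derivative ∘ₗ derivative + c • derivative

lemma Lop_apply (c : ℂ) (A : Polynomial ℂ) :
    Lop c A = derivative (derivative A) + c • derivative A := rfl

/-- kills polynomials of small degree -/
lemma iter_Lop_eq_zero (c : ℂ) : ∀ (m : ℕ) (A : Polynomial ℂ),
    A.degree < (m : ℕ) → (Lop c ^ m) A = 0 := by
  intro m
  induction m with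
  | zero =>
    intro A hA
    rcases eq_or_ne A 0 with rfl | hA0
    · simp
    · exact absurd (Polynomial.zero_le_degree_iff.mpr hA0)
        (not_le.mpr (by exact_mod_cast hA))
  | succ m ih =>
    intro A hA
    rcases eq_or_ne A 0 with rfl | hA0
    · simp
    have h1 : (Lop c A).degree < (m : ℕ) := by
      have hle : A.degree ≤ (m : ℕ) := by
        rw [Polynomial.degree_eq_natDegree hA0] at hA ⊢
        exact_mod_cast Nat.lt_succ_iff.mp (by exact_mod_cast hA)
      have h' : (derivative A).degree < A.degree := Polynomial.degree_derivative_lt hA0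
      have h'' : (derivative (derivative A)).degree < A.degree :=
        lt_of_le_of_lt Polynomial.degree_derivative_le h'
      have hs : (c • derivative A).degree < A.degree :=
        lt_of_le_of_lt (Polynomial.degree_smul_le c _) h'
      calc (Lop c A).degree ≤ max _ _ := by rw [Lop_apply]; exact Polynomial.degree_add_le _ _
        _ < A.degree := max_lt h'' hs
        _ ≤ (m : ℕ) := hle
    rw [pow_succ, Module.End.mul_apply]
    exact ih _ h1

lemma iter_Lop_pow (c : ℂ) : ∀ k : ℕ,
    (Lop c ^ k) ((X : Polynomial ℂ) ^ k) = C (c ^ k * (k.factorial : ℂ)) := by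
  intro k
  induction k with
  | zero => simp
  | succ k ih =>
    have hstep : Lop c ((X : Polynomial ℂ) ^ (k + 1))
        = ((((k+1) * k : ℕ) : ℂ)) • (X : Polynomial ℂ) ^ (k - 1)
          + (c * (((k+1) : ℕ) : ℂ)) • (X : Polynomial ℂ) ^ k := by
      rw [Lop_apply, Polynomial.derivative_X_pow, Nat.add_sub_cancel,
        Polynomial.derivative_C_mul, Polynomial.derivative_X_pow]
      simp only [Polynomial.smul_eq_C_mul, ← Polynomial.C_mul, ← mul_assoc]
      push_cast
      ring_nf
    rw [pow_succ, Module.End.mul_apply, hstep, map_add, map_smul, map_smul]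
    have hz : (Lop c ^ k) ((X : Polynomial ℂ) ^ (k - 1)) = 0 ∨ (((k+1) * k : ℕ) : ℂ) = 0 := by
      rcases Nat.eq_zero_or_pos k with rfl | hk
      · right; simp
      · left
        exact iter_Lop_eq_zero c k _
          (by rw [Polynomial.degree_X_pow]; exact_mod_cast Nat.sub_lt hk one_pos)
    have hz' : ((((k+1) * k : ℕ) : ℂ)) • (Lop c ^ k) ((X : Polynomial ℂ) ^ (k - 1)) = 0 := by
      rcases hz with h | h
      · rw [h, smul_zero]
      · rw [h, zero_smul]
    rw [hz', ih, zero_add, Polynomial.smul_C]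
    congr 1
    push_cast [Nat.factorial_succ, smul_eq_mul]
    ring

end Stmt3

namespace Stmt3

noncomputable def G (n : ℕ) (A B : Polynomial ℂ) (t : ℝ) : ℂ :=
  A.eval ((Real.log t : ℝ) : ℂ) + (t : ℂ) ^ n * B.eval ((Real.log t : ℝ) : ℂ)

lemma hasDerivAt_G (n : ℕ) (hn : 1 ≤ n) (A B : Polynomial ℂ) {t : ℝ} (ht : 0 < t) :
    HasDerivAt (G n A B)
      (G n (derivative A) ((n : ℂ) • B + derivative B) t / (t : ℂ)) t := by
  have htne : t ≠ 0 := ne_of_gt ht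
  have htC : (t : ℂ) ≠ 0 := by exact_mod_cast htne
  have hlog : HasDerivAt (fun s : ℝ => ((Real.log s : ℝ) : ℂ)) ((t⁻¹ : ℝ) : ℂ) t :=
    (Real.hasDerivAt_log htne).ofReal_comp
  have hA : HasDerivAt (fun s : ℝ => Polynomial.eval ((Real.log s : ℝ) : ℂ) A)
      (Polynomial.eval ((Real.log t : ℝ) : ℂ) (derivative A) * ((t⁻¹ : ℝ) : ℂ)) t := by
    exact HasDerivAt.comp t (A.hasDerivAt (((Real.log t : ℝ) : ℂ))) hlog
  have hB : HasDerivAt (fun s : ℝ => Polynomial.eval ((Real.log s : ℝ) : ℂ) B)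
      (Polynomial.eval ((Real.log t : ℝ) : ℂ) (derivative B) * ((t⁻¹ : ℝ) : ℂ)) t := by
    exact HasDerivAt.comp t (B.hasDerivAt (((Real.log t : ℝ) : ℂ))) hlog
  have hpow : HasDerivAt (fun s : ℝ => ((s : ℝ) : ℂ) ^ n)
      ((n : ℂ) * ((t : ℝ) : ℂ) ^ (n - 1)) t :=
    (hasDerivAt_pow n ((t : ℝ) : ℂ)).comp_ofReal
  have hcomb := hA.add (hpow.mul hB)
  have hval : G n (derivative A) ((n : ℂ) • B + derivative B) t / (t : ℂ)
      = Polynomial.eval ((Real.log t : ℝ) : ℂ) (derivative A) * ((t⁻¹ : ℝ) : ℂ)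
        + ((n : ℂ) * ((t : ℝ) : ℂ) ^ (n - 1) * Polynomial.eval ((Real.log t : ℝ) : ℂ) B
          + ((t : ℝ) : ℂ) ^ n * (Polynomial.eval ((Real.log t : ℝ) : ℂ) (derivative B)
              * ((t⁻¹ : ℝ) : ℂ))) := by
    have hpw : ((t : ℝ) : ℂ) ^ n = ((t : ℝ) : ℂ) ^ (n - 1) * (t : ℂ) := by
      rw [← pow_succ, Nat.sub_add_cancel hn]
    simp only [G, Polynomial.eval_add, Polynomial.eval_smul, smul_eq_mul, Complex.ofReal_inv]
    rw [hpw]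
    field_simp
  rw [hval]
  exact hcomb

lemma deriv_G (n : ℕ) (hn : 1 ≤ n) (A B : Polynomial ℂ) {t : ℝ} (ht : 0 < t) :
    deriv (G n A B) t = G n (derivative A) ((n : ℂ) • B + derivative B) t / (t : ℂ) :=
  (hasDerivAt_G n hn A B ht).deriv

lemma tau_congr (n : ℕ) {φ ψ : ℝ → (Fin n → ℝ) → ℂ}
    (h : ∀ s, 0 < s → ∀ y, φ s y = ψ s y) {t : ℝ} (ht : 0 < t) (x : Fin n → ℝ) :
    tauRHn n φ t x = tauRHn n ψ t x := by
  have h1 : ∀ {s : ℝ}, 0 < s → (fun u => φ u x) =ᶠ[nhds s] (fun u => ψ u x) := fun hs =>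
    Filter.eventually_of_mem (isOpen_Ioi.mem_nhds hs) fun u hu => h u hu x
  have hd1 : deriv (fun s => φ s x) t = deriv (fun s => ψ s x) t := (h1 ht).deriv_eq
  have hd2 : deriv (deriv (fun s => φ s x)) t = deriv (deriv (fun s => ψ s x)) t := by
    apply Filter.EventuallyEq.deriv_eq
    exact Filter.eventually_of_mem (isOpen_Ioi.mem_nhds ht) fun s hs => (h1 hs).deriv_eq
  have hl : φ t = ψ t := funext fun y => h t ht y
  unfold tauRHn
  rw [hd1, hd2, hl]

lemma lapE_const_mul (n : ℕ) (H : (Fin n → ℝ) → ℂ) (c : ℂ) (x : Fin n → ℝ) :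
    lapE n (fun y => c * H y) x = c * lapE n H x := by
  unfold lapE
  rw [Finset.mul_sum]
  refine Finset.sum_congr rfl fun i _ => ?_
  beta_reduce
  rw [deriv_const_mul_field' c, deriv_const_mul_field c]

lemma tau_apply_G (n : ℕ) (hn : 1 ≤ n) (H : (Fin n → ℝ) → ℂ) (hH : ∀ x, lapE n H x = 0)
    (A B : Polynomial ℂ) {t : ℝ} (ht : 0 < t) (x : Fin n → ℝ) :
    tauRHn n (fun s y => G n A B s * H y) t x
      = G n (Lop (-(n : ℂ)) A) (Lop (n : ℂ) B) t * H x := by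
  have htne : t ≠ 0 := ne_of_gt ht
  have htC : (t : ℂ) ≠ 0 := by exact_mod_cast htne
  set A₁ := derivative A with hA₁
  set B₁ := (n : ℂ) • B + derivative B with hB₁
  have hmem : Set.Ioi (0 : ℝ) ∈ nhds t := isOpen_Ioi.mem_nhds ht
  have hd1 : deriv (fun s => G n A B s * H x) t = (G n A₁ B₁ t / (t : ℂ)) * H x := by
    rw [deriv_mul_const_field (H x), deriv_G n hn A B ht]
  have hid : HasDerivAt (fun s : ℝ => (s : ℂ)) 1 t := by
    simpa using (hasDerivAt_id t).ofReal_comp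
  have hq : HasDerivAt (fun s : ℝ => G n A₁ B₁ s / (s : ℂ))
      ((G n (derivative A₁) ((n : ℂ) • B₁ + derivative B₁) t / (t : ℂ) * (t : ℂ)
          - G n A₁ B₁ t * 1) / (t : ℂ) ^ 2) t :=
    (hasDerivAt_G n hn A₁ B₁ ht).div hid htC
  have hder_ev : deriv (G n A B) =ᶠ[nhds t] fun s => G n A₁ B₁ s / (s : ℂ) :=
    Filter.eventually_of_mem hmem fun s hs => deriv_G n hn A B hs
  have hd2 : deriv (deriv (fun s => G n A B s * H x)) t
      = ((G n (derivative A₁) ((n : ℂ) • B₁ + derivative B₁) t / (t : ℂ) * (t : ℂ)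
          - G n A₁ B₁ t * 1) / (t : ℂ) ^ 2) * H x := by
    rw [deriv_mul_const_field' (H x), deriv_mul_const_field (H x)]
    rw [hder_ev.deriv_eq, hq.deriv]
  have hlap : lapE n (fun y => G n A B t * H y) x = 0 := by
    rw [lapE_const_mul, hH, mul_zero]
  have hkey : G n (Lop (-(n : ℂ)) A) (Lop (n : ℂ) B) t
      = G n (derivative A₁) ((n : ℂ) • B₁ + derivative B₁) t - (n : ℂ) * G n A₁ B₁ t := by
    simp only [G, Lop_apply, hA₁, hB₁, derivative_add, derivative_smul,
      Polynomial.eval_add, Polynomial.eval_smul, smul_eq_mul]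
    ring
  show (t : ℂ) ^ 2 * deriv (deriv (fun s => G n A B s * H x)) t
      + (1 - (n : ℂ)) * (t : ℂ) * deriv (fun s => G n A B s * H x) t
      + (t : ℂ) ^ 2 * lapE n (fun y => G n A B t * H y) x = _
  rw [hd1, hd2, hlap, hkey, mul_zero, add_zero]
  field_simp
  ring

end Stmt3

namespace Stmt3

lemma iterate_eq (n : ℕ) (hn : 1 ≤ n) (H : (Fin n → ℝ) → ℂ) (hH : ∀ x, lapE n H x = 0)
    (p : ℕ) (a b : ℂ) (m : ℕ) :
    ∀ t : ℝ, 0 < t → ∀ x : Fin n → ℝ,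
      (tauRHn n)^[m]
        (fun t x => (a + b * (t : ℂ) ^ n) * (Real.log t : ℂ) ^ (p - 1) * H x) t x
      = G n ((Lop (-(n : ℂ)) ^ m) (C a * X ^ (p - 1)))
          ((Lop ((n : ℂ)) ^ m) (C b * X ^ (p - 1))) t * H x := by
  induction m with
  | zero =>
    intro t ht x
    simp only [Function.iterate_zero, id_eq, pow_zero, Module.End.one_apply]
    simp only [G, Polynomial.eval_mul, Polynomial.eval_C, Polynomial.eval_pow,
      Polynomial.eval_X]
    ring
  | succ m ih =>
    intro t ht x
    rw [Function.iterate_succ_apply']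
    refine (tau_congr n (fun s hs y => ih s hs y) ht x).trans ?_
    rw [tau_apply_G n hn H hH _ _ ht x]
    rw [pow_succ', pow_succ', Module.End.mul_apply, Module.End.mul_apply]

end Stmt3

open Stmt3 in
/-- for harmonic `H`, `φ_p(t,x) = (a + b·tⁿ)·log(t)^{p−1}·H(x)` is
`p`-harmonic on `ℝH^{n+1}`, and proper `p`-harmonic if `(a,b) ≠ (0,0)` and `H ≠ 0`. -/
theorem stmt_3 (n : ℕ) (hn : 1 ≤ n) (H : (Fin n → ℝ) → ℂ) (hH : ∀ x, lapE n H x = 0)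
    (p : ℕ) (hp : 1 ≤ p) (a b : ℂ) :
    letI φp : ℝ → (Fin n → ℝ) → ℂ := fun t x =>
      (a + b * (t : ℂ) ^ n) * (Real.log t : ℂ) ^ (p - 1) * H x
    (∀ t > (0 : ℝ), ∀ x, (tauRHn n)^[p] φp t x = 0) ∧
      ((a, b) ≠ (0, 0) → H ≠ 0 →
        ∃ t > (0 : ℝ), ∃ x, (tauRHn n)^[p - 1] φp t x ≠ 0) := by
  have hdeg : ∀ c : ℂ, (C c * X ^ (p - 1) : Polynomial ℂ).degree < (p : ℕ) := by
    intro c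
    calc (C c * X ^ (p - 1) : Polynomial ℂ).degree
        ≤ (C c : Polynomial ℂ).degree + (X ^ (p - 1) : Polynomial ℂ).degree :=
          Polynomial.degree_mul_le _ _
      _ ≤ 0 + ((p - 1 : ℕ) : WithBot ℕ) := by
          gcongr
          · exact Polynomial.degree_C_le
          · rw [Polynomial.degree_X_pow]
      _ = ((p - 1 : ℕ) : WithBot ℕ) := zero_add _
      _ < (p : ℕ) := by exact_mod_cast Nat.sub_lt (by omega) one_pos
  constructor
  · intro t ht x
    rw [iterate_eq n hn H hH p a b p t ht x]
    rw [iter_Lop_eq_zero _ p _ (hdeg a), iter_Lop_eq_zero _ p _ (hdeg b)]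
    simp [G]
  · intro hab hHne
    obtain ⟨x0, hx0⟩ := Function.ne_iff.mp hHne
    set c1 : ℂ := (-(n : ℂ)) ^ (p - 1) * ((p - 1).factorial : ℂ) with hc1def
    set c2 : ℂ := ((n : ℂ)) ^ (p - 1) * ((p - 1).factorial : ℂ) with hc2def
    have hA : (Lop (-(n : ℂ)) ^ (p - 1)) (C a * X ^ (p - 1)) = C (a * c1) := by
      rw [← Polynomial.smul_eq_C_mul, map_smul, iter_Lop_pow, Polynomial.smul_C, smul_eq_mul]
    have hB : (Lop ((n : ℂ)) ^ (p - 1)) (C b * X ^ (p - 1)) = C (b * c2) := by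
      rw [← Polynomial.smul_eq_C_mul, map_smul, iter_Lop_pow, Polynomial.smul_C, smul_eq_mul]
    have hval : ∀ t : ℝ, 0 < t →
        (tauRHn n)^[p - 1]
          (fun t x => (a + b * (t : ℂ) ^ n) * (Real.log t : ℂ) ^ (p - 1) * H x) t x0
        = (a * c1 + (t : ℂ) ^ n * (b * c2)) * H x0 := by
      intro t ht
      rw [iterate_eq n hn H hH p a b (p - 1) t ht x0, hA, hB]
      simp [G]
    have hnne : (n : ℂ) ≠ 0 := Nat.cast_ne_zero.mpr (by omega)
    have hfac : ((p - 1).factorial : ℂ) ≠ 0 :=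
      Nat.cast_ne_zero.mpr (Nat.factorial_ne_zero _)
    have hc1 : c1 ≠ 0 := mul_ne_zero (pow_ne_zero _ (neg_ne_zero.mpr hnne)) hfac
    have hc2 : c2 ≠ 0 := mul_ne_zero (pow_ne_zero _ hnne) hfac
    by_cases hb : b = 0
    · have ha : a ≠ 0 := by
        rintro rfl
        exact hab (by simp [hb])
      refine ⟨1, one_pos, x0, ?_⟩
      rw [hval 1 one_pos]
      simp only [hb, zero_mul, mul_zero, add_zero]
      exact mul_ne_zero (mul_ne_zero ha hc1) hx0
    · by_cases h1 : a * c1 + b * c2 = 0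
      · refine ⟨2, two_pos, x0, ?_⟩
        rw [hval 2 two_pos]
        refine mul_ne_zero ?_ hx0
        intro h2
        have e2 : a * c1 + (2 : ℂ) ^ n * (b * c2) = 0 := by
          convert h2 using 3
          norm_num
        have hfact : ((2 : ℂ) ^ n - 1) * (b * c2) = 0 := by
          linear_combination e2 - h1
        have h2n : (2 : ℂ) ^ n ≠ 1 := by
          intro hE
          have hlt : (1 : ℕ) < 2 ^ n := Nat.one_lt_pow (by omega) (by omega)
          have hcast : ((2 ^ n : ℕ) : ℂ) = ((1 : ℕ) : ℂ) := by push_cast; simpa using hE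
          have := Nat.cast_injective (R := ℂ) hcast
          omega
        rcases mul_eq_zero.mp hfact with h | h
        · exact h2n (sub_eq_zero.mp h)
        · exact mul_ne_zero hb hc2 h
      · refine ⟨1, one_pos, x0, ?_⟩
        rw [hval 1 one_pos]
        refine mul_ne_zero ?_ hx0
        simpa using h1
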